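/- For exponential distributions with rates λ₁ and λ₂, the dynamic relative extropy for residual lifetimes is constant in t, equal to (1/4)(λ₁ + λ₂ - 4λ₁λ₂/(λ₁+λ₂)). -/

import Mathlib

open MeasureTheory Set Real

lemma integral_exp_neg_mul_Ioi' {b : ℝ} (hb : 0 < b) (t : ℝ) :
    ∫ x in Ioi t, Real.exp (-b * x) = Real.exp (-b * t) / b := by
  have hd : ∀ x ∈ Ici t, HasDerivAt (fun y => -Real.exp (-b * y) / b)
      (Real.exp (-b * x)) x := by
    intro x _
    have h1 : HasDerivAt (fun y : ℝ => -b * y) (-b) x := by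
      simpa using (hasDerivAt_id x).const_mul (-b)
    have h2 := ((Real.hasDerivAt_exp (-b * x)).comp x h1).neg.div_const b
    refine h2.congr_deriv ?_
    rw [div_eq_iff hb.ne']; ring
  have hint : IntegrableOn (fun x => Real.exp (-b * x)) (Ioi t) :=
    exp_neg_integrableOn_Ioi t hb
  have htend : Filter.Tendsto (fun x => -Real.exp (-b * x) / b) Filter.atTop (nhds 0) := by
    have : Filter.Tendsto (fun x => Real.exp (-b * x)) Filter.atTop (nhds 0) :=
      Real.tendsto_exp_comp_nhds_zero.mpr
        (Filter.Tendsto.const_mul_atTop_of_neg (neg_neg_iff_pos.mpr hb) Filter.tendsto_id)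
    simpa using this.neg.div_const b
  have := integral_Ioi_of_hasDerivAt_of_tendsto' hd hint htend
  rw [this]; ring

/-- For exponential distributions with rates `λ₁, λ₂ > 0`, the dynamic relative
extropy for residual lifetimes is constant in `t`, equal to
`(1/4)(λ₁ + λ₂ - 4λ₁λ₂/(λ₁+λ₂))`. -/
theorem dynamic_relative_extropy_exponential_constant
    (l₁ l₂ : ℝ) (h₁ : 0 < l₁) (h₂ : 0 < l₂) :
    ∀ t : ℝ, 0 ≤ t →
      (1/2) * ∫ x in Ioi t,
          (l₁ * Real.exp (-l₁ * x) / Real.exp (-l₁ * t)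
            - l₂ * Real.exp (-l₂ * x) / Real.exp (-l₂ * t)) ^ 2
        = (1/4) * (l₁ + l₂ - 4 * l₁ * l₂ / (l₁ + l₂)) := by
  intro t _
  have hs : 0 < l₁ + l₂ := by linarith
  have key : ∀ x : ℝ,
      (l₁ * Real.exp (-l₁ * x) / Real.exp (-l₁ * t)
        - l₂ * Real.exp (-l₂ * x) / Real.exp (-l₂ * t)) ^ 2
      = l₁^2 * Real.exp (2*l₁*t) * Real.exp (-(2*l₁) * x)
        - 2*l₁*l₂ * Real.exp ((l₁+l₂)*t) * Real.exp (-(l₁+l₂) * x)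
        + l₂^2 * Real.exp (2*l₂*t) * Real.exp (-(2*l₂) * x) := by
    intro x
    rw [mul_div_assoc, mul_div_assoc, ← Real.exp_sub, ← Real.exp_sub]
    have e1 : Real.exp (2*l₁*t) * Real.exp (-(2*l₁)*x)
        = Real.exp (-l₁*x - -l₁*t) * Real.exp (-l₁*x - -l₁*t) := by
      rw [← Real.exp_add, ← Real.exp_add]; ring_nf
    have e2 : Real.exp ((l₁+l₂)*t) * Real.exp (-(l₁+l₂)*x)
        = Real.exp (-l₁*x - -l₁*t) * Real.exp (-l₂*x - -l₂*t) := by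
      rw [← Real.exp_add, ← Real.exp_add]; ring_nf
    have e3 : Real.exp (2*l₂*t) * Real.exp (-(2*l₂)*x)
        = Real.exp (-l₂*x - -l₂*t) * Real.exp (-l₂*x - -l₂*t) := by
      rw [← Real.exp_add, ← Real.exp_add]; ring_nf
    rw [show l₁^2 * Real.exp (2*l₁*t) * Real.exp (-(2*l₁)*x)
        = l₁^2 * (Real.exp (2*l₁*t) * Real.exp (-(2*l₁)*x)) by ring, e1,
      show 2*l₁*l₂ * Real.exp ((l₁+l₂)*t) * Real.exp (-(l₁+l₂)*x)
        = 2*l₁*l₂ * (Real.exp ((l₁+l₂)*t) * Real.exp (-(l₁+l₂)*x)) by ring, e2,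
      show l₂^2 * Real.exp (2*l₂*t) * Real.exp (-(2*l₂)*x)
        = l₂^2 * (Real.exp (2*l₂*t) * Real.exp (-(2*l₂)*x)) by ring, e3]
    ring
  simp only [key]
  have i1 : IntegrableOn (fun x => l₁^2 * Real.exp (2*l₁*t) * Real.exp (-(2*l₁) * x))
      (Ioi t) := (exp_neg_integrableOn_Ioi t (by positivity)).const_mul _
  have i2 : IntegrableOn (fun x => 2*l₁*l₂ * Real.exp ((l₁+l₂)*t) * Real.exp (-(l₁+l₂) * x))
      (Ioi t) := (exp_neg_integrableOn_Ioi t (by positivity)).const_mul _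
  have i3 : IntegrableOn (fun x => l₂^2 * Real.exp (2*l₂*t) * Real.exp (-(2*l₂) * x))
      (Ioi t) := (exp_neg_integrableOn_Ioi t (by positivity)).const_mul _
  have i12 : IntegrableOn (fun x => l₁^2 * Real.exp (2*l₁*t) * Real.exp (-(2*l₁) * x)
      - 2*l₁*l₂ * Real.exp ((l₁+l₂)*t) * Real.exp (-(l₁+l₂) * x)) (Ioi t) := i1.sub i2
  rw [integral_add i12 i3, integral_sub i1 i2,
    MeasureTheory.integral_const_mul, MeasureTheory.integral_const_mul, MeasureTheory.integral_const_mul,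
    integral_exp_neg_mul_Ioi' (by positivity : (0:ℝ) < 2*l₁) t,
    integral_exp_neg_mul_Ioi' hs t,
    integral_exp_neg_mul_Ioi' (by positivity : (0:ℝ) < 2*l₂) t]
  rw [show -(2*l₁)*t = -(2*l₁*t) by ring, show -(l₁+l₂)*t = -((l₁+l₂)*t) by ring,
    show -(2*l₂)*t = -(2*l₂*t) by ring, Real.exp_neg, Real.exp_neg, Real.exp_neg]
  have n1 := Real.exp_ne_zero (2*l₁*t)
  have n2 := Real.exp_ne_zero ((l₁+l₂)*t)
  have n3 := Real.exp_ne_zero (2*l₂*t)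
  field_simp
  ring
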